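/- For each n ≥ 2, there exist a permutation w ∈ S_n and an essential semilattice congruence ≡ on the left weak order of S_n such that S_≡(w) has exactly n − 2 right descents. Explicitly, with k = ⌈n/2⌉, let u ∈ S_n be defined by u(i) = (i+1)/2 for i odd and u(i) = k + i/2 for i even, and v ∈ S_n by v(i) = k − (i−1)/2 for i odd and v(i) = n + 1 − i/2 for i even; then u ≤_L v, u and v have the same descent set, and vu⁻¹ is the permutation k(k−1)⋯21 n(n−1)⋯(k+1), which has n − 2 descents. -/

import Mathlib

namespace Stmt8Aux

open Equiv Finset

variable {n : ℕ}

/-- step relation: (i,j) with i<j is a non-inversion of x or of y -/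
def R (x y : Equiv.Perm (Fin n)) (i j : Fin n) : Prop :=
  i < j ∧ (x i < x j ∨ y i < y j)

/-- transitive closure -/
def TC (x y : Equiv.Perm (Fin n)) : Fin n → Fin n → Prop := Relation.TransGen (R x y)

lemma TC.lt {x y : Equiv.Perm (Fin n)} {i j : Fin n} (h : TC x y i j) : i < j := by
  induction h with
  | single h => exact h.1
  | tail _ h ih => exact ih.trans h.1

lemma R.straddle {x y : Equiv.Perm (Fin n)} {p q m : Fin n} (h : R x y p q)
    (h1 : p < m) (h2 : m < q) : R x y p m ∨ R x y m q := by
  rcases h.2 with h' | h'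
  · rcases lt_or_ge (x p) (x m) with hh | hh
    · exact Or.inl ⟨h1, Or.inl hh⟩
    · exact Or.inr ⟨h2, Or.inl (lt_of_le_of_lt hh h')⟩
  · rcases lt_or_ge (y p) (y m) with hh | hh
    · exact Or.inl ⟨h1, Or.inr hh⟩
    · exact Or.inr ⟨h2, Or.inr (lt_of_le_of_lt hh h')⟩

lemma TC.straddle {x y : Equiv.Perm (Fin n)} {p q m : Fin n} (h : TC x y p q) (h1 : p < m) :
    m < q → (TC x y p m ∨ TC x y m q) := by
  induction h with
  | single h => exact fun h2 => (h.straddle h1 h2).imp .single .single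
  | @tail b c hpb hbc ih =>
    intro h2
    rcases lt_trichotomy m b with hc | hc | hc
    · rcases ih hc with h | h
      · exact Or.inl h
      · exact Or.inr (h.tail hbc)
    · subst hc; exact Or.inl hpb
    · rcases hbc.straddle hc h2 with h | h
      · exact Or.inl (hpb.tail h)
      · exact Or.inr (.single h)

/-- the strict linear order whose rank function is the meet -/
def rho (x y : Equiv.Perm (Fin n)) (a b : Fin n) : Prop :=
  (a < b ∧ TC x y a b) ∨ (b < a ∧ ¬ TC x y b a)

lemma rho_irrefl (x y : Equiv.Perm (Fin n)) (a : Fin n) : ¬ rho x y a a := by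
  rintro (⟨h, -⟩ | ⟨h, -⟩) <;> exact lt_irrefl _ h

lemma rho_total (x y : Equiv.Perm (Fin n)) {a b : Fin n} (h : a ≠ b) :
    rho x y a b ∨ rho x y b a := by
  rcases lt_or_gt_of_ne h with h' | h'
  · by_cases ht : TC x y a b
    · exact Or.inl (Or.inl ⟨h', ht⟩)
    · exact Or.inr (Or.inr ⟨h', ht⟩)
  · by_cases ht : TC x y b a
    · exact Or.inr (Or.inl ⟨h', ht⟩)
    · exact Or.inl (Or.inr ⟨h', ht⟩)

lemma rho_trans {x y : Equiv.Perm (Fin n)} {a b c : Fin n}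
    (h1 : rho x y a b) (h2 : rho x y b c) : rho x y a c := by
  rcases h1 with ⟨hab, t1⟩ | ⟨hba, t1⟩
  · rcases h2 with ⟨hbc, t2⟩ | ⟨hcb, t2⟩
    · exact Or.inl ⟨hab.trans hbc, t1.trans t2⟩
    · -- a < b, T a b ; c < b, ¬ T c b
      rcases lt_trichotomy a c with hac | hac | hac
      · rcases t1.straddle hac hcb with h | h
        · exact Or.inl ⟨hac, h⟩
        · exact absurd h t2
      · subst hac; exact absurd t1 t2
      · refine Or.inr ⟨hac, fun hca => t2 (hca.trans t1)⟩
  · rcases h2 with ⟨hbc, t2⟩ | ⟨hcb, t2⟩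
    · -- b < a, ¬ T b a ; b < c, T b c
      rcases lt_trichotomy a c with hac | hac | hac
      · rcases t2.straddle hba hac with h | h
        · exact absurd h t1
        · exact Or.inl ⟨hac, h⟩
      · subst hac; exact absurd t2 t1
      · refine Or.inr ⟨hac, fun hca => t1 (t2.trans hca)⟩
    · -- b < a, ¬ T b a ; c < b, ¬ T c b  so c < b < a
      refine Or.inr ⟨hcb.trans hba, fun hca => ?_⟩
      rcases hca.straddle hcb hba with h | h
      · exact t2 h
      · exact t1 h

open Classical in
/-- rank of `a` in the linear order `rho` -/
noncomputable def rk (x y : Equiv.Perm (Fin n)) (a : Fin n) : Fin n :=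
  ⟨(univ.filter (fun b => rho x y b a)).card, by
    have ha : a ∉ univ.filter (fun b => rho x y b a) := by
      simp [rho_irrefl]
    calc (univ.filter (fun b => rho x y b a)).card
        ≤ (univ.erase a).card := Finset.card_le_card (fun b hb => by
          rcases Finset.mem_filter.mp hb with ⟨-, hr⟩
          exact Finset.mem_erase.mpr ⟨fun hba => rho_irrefl x y a (hba ▸ hr), Finset.mem_univ b⟩)
      _ < n := by
          rw [Finset.card_erase_of_mem (Finset.mem_univ a), Finset.card_univ, Fintype.card_fin]
          exact Nat.sub_lt a.pos one_pos⟩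

lemma rk_lt_rk {x y : Equiv.Perm (Fin n)} {a b : Fin n} (h : rho x y a b) :
    rk x y a < rk x y b := by
  classical
  have hsub : univ.filter (fun c => rho x y c a) ⊂ univ.filter (fun c => rho x y c b) := by
    constructor
    · intro c hc
      rcases Finset.mem_filter.mp hc with ⟨-, hr⟩
      exact Finset.mem_filter.mpr ⟨Finset.mem_univ c, rho_trans hr h⟩
    · intro hcon
      have ha : a ∈ univ.filter (fun c => rho x y c b) := Finset.mem_filter.mpr ⟨Finset.mem_univ a, h⟩
      have := Finset.mem_filter.mp (hcon ha)
      exact rho_irrefl x y a this.2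
  have := Finset.card_lt_card hsub
  simpa [rk, Fin.lt_def] using this

lemma rk_injective (x y : Equiv.Perm (Fin n)) : Function.Injective (rk x y) := by
  intro a b hab
  by_contra hne
  rcases rho_total x y hne with h | h
  · exact absurd hab (Fin.ne_of_lt (rk_lt_rk h))
  · exact absurd hab.symm (Fin.ne_of_lt (rk_lt_rk h))

/-- the meet of `x` and `y` in left weak order -/
noncomputable def meet (x y : Equiv.Perm (Fin n)) : Equiv.Perm (Fin n) :=
  Equiv.ofBijective (rk x y) (Finite.injective_iff_bijective.mp (rk_injective x y))

lemma meet_apply (x y : Equiv.Perm (Fin n)) (a : Fin n) : meet x y a = rk x y a := rfl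

lemma meet_lt_meet {x y : Equiv.Perm (Fin n)} {a b : Fin n} (h : rho x y a b) :
    meet x y a < meet x y b := rk_lt_rk h

lemma meet_lt_iff {x y : Equiv.Perm (Fin n)} {i j : Fin n} (hij : i < j) :
    meet x y j < meet x y i ↔ ¬ TC x y i j := by
  constructor
  · intro h ht
    exact absurd (meet_lt_meet (x := x) (y := y) (Or.inl ⟨hij, ht⟩)) (asymm h)
  · intro ht
    exact meet_lt_meet (Or.inr ⟨hij, ht⟩)

end Stmt8Aux

namespace Stmt8Aux

open Equiv Finset

variable {n : ℕ}

lemma lt_of_not_lt {c : Equiv.Perm (Fin n)} {i j : Fin n} (hne : i ≠ j) (h : ¬ c i < c j) :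
    c j < c i :=
  lt_of_le_of_ne (not_lt.mp h) (fun he => hne (c.injective he.symm))

lemma strictMono_fin_id {f : Fin n → Fin n} (hf : StrictMono f) : ∀ i, f i = i := by
  haveI : WellFoundedLT (Fin n) := inferInstance
  have h1 : ∀ i, i ≤ f i := fun i => hf.le_apply
  have h2 : StrictMono (fun j : Fin n => (f j.rev).rev) := by
    intro a b hab
    exact Fin.rev_lt_rev.mpr (hf (Fin.rev_lt_rev.mpr hab))
  have h3 : ∀ i : Fin n, f i ≤ i := by
    intro i
    have := h2.le_apply (x := i.rev)
    simpa [Fin.rev_le_rev, Fin.rev_rev] using this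
  exact fun i => le_antisymm (h3 i) (h1 i)

lemma perm_eq_of_relative {a b : Equiv.Perm (Fin n)}
    (h : ∀ i j : Fin n, i < j → (a i < a j ↔ b i < b j)) : a = b := by
  have hiff : ∀ i j : Fin n, i ≠ j → (a i < a j ↔ b i < b j) := by
    intro i j hne
    rcases lt_or_gt_of_ne hne with hh | hh
    · exact h i j hh
    · constructor
      · intro hlt
        exact lt_of_not_lt hne.symm (fun hc => absurd ((h j i hh).mpr hc) (asymm hlt))
      · intro hlt
        exact lt_of_not_lt hne.symm (fun hc => absurd ((h j i hh).mp hc) (asymm hlt))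
  have hmono : StrictMono (fun p => b (a.symm p)) := by
    intro p q hpq
    have hval : a (a.symm p) < a (a.symm q) := by simpa using hpq
    have hne : a.symm p ≠ a.symm q := by
      intro he
      rw [he] at hval
      exact absurd hval (lt_irrefl _)
    exact (hiff _ _ hne).mp hval
  refine Equiv.ext fun p => ?_
  have h2 := strictMono_fin_id hmono (a p)
  simpa using h2.symm

/-- any common lower bound is monotone along the step relation -/
lemma lt_of_TC {a b c : Equiv.Perm (Fin n)}
    (hca : ∀ i j : Fin n, i < j → c j < c i → a j < a i)
    (hcb : ∀ i j : Fin n, i < j → c j < c i → b j < b i)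
    {i j : Fin n} (ht : TC a b i j) : c i < c j := by
  have base : ∀ {p q : Fin n}, R a b p q → c p < c q := by
    intro p q hr
    by_contra hc
    have hlt : c q < c p := lt_of_not_lt (Fin.ne_of_lt hr.1) hc
    rcases hr.2 with hx | hx
    · exact absurd hx (asymm (hca p q hr.1 hlt))
    · exact absurd hx (asymm (hcb p q hr.1 hlt))
  induction ht with
  | single hr => exact base hr
  | @tail p q hip hpq ih => exact lt_trans ih (base hpq)

noncomputable instance : SemilatticeInf (Equiv.Perm (Fin n)) where
  le a b := ∀ i j : Fin n, i < j → a j < a i → b j < b i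
  le_refl a := fun _ _ _ h => h
  le_trans a b c hab hbc := fun i j hij h => hbc i j hij (hab i j hij h)
  le_antisymm a b hab hba := by
    apply perm_eq_of_relative
    intro i j hij
    constructor
    · intro h
      by_contra hc
      have : b j < b i := lt_of_not_lt (Fin.ne_of_lt hij) hc
      exact absurd h (asymm (hba i j hij this))
    · intro h
      by_contra hc
      have : a j < a i := lt_of_not_lt (Fin.ne_of_lt hij) hc
      exact absurd h (asymm (hab i j hij this))
  inf := meet
  inf_le_left a b := by
    intro i j hij h
    have hnt : ¬ TC a b i j := (meet_lt_iff hij).mp h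
    exact lt_of_not_lt (Fin.ne_of_lt hij) (fun hc => hnt (.single ⟨hij, Or.inl hc⟩))
  inf_le_right a b := by
    intro i j hij h
    have hnt : ¬ TC a b i j := (meet_lt_iff hij).mp h
    exact lt_of_not_lt (Fin.ne_of_lt hij) (fun hc => hnt (.single ⟨hij, Or.inr hc⟩))
  le_inf c a b hca hcb := by
    intro i j hij h
    refine (meet_lt_iff hij).mpr (fun ht => ?_)
    exact absurd h (asymm (lt_of_TC hca hcb ht))

lemma le_iff {a b : Equiv.Perm (Fin n)} :
    a ≤ b ↔ ∀ i j : Fin n, i < j → a j < a i → b j < b i := Iff.rfl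

end Stmt8Aux

namespace Stmt8Aux

open Equiv Finset

variable {n : ℕ}

/-- descent set -/
def Des (x : Equiv.Perm (Fin n)) : Finset (Fin n) :=
  univ.filter (fun i => ∃ j : Fin n, (j : ℕ) = (i : ℕ) + 1 ∧ x j < x i)

lemma mem_Des {x : Equiv.Perm (Fin n)} {i : Fin n} :
    i ∈ Des x ↔ ∃ j : Fin n, (j : ℕ) = (i : ℕ) + 1 ∧ x j < x i := by
  simp [Des]

lemma TC_adj {a b : Equiv.Perm (Fin n)} {i j : Fin n} (hj : (j : ℕ) = (i : ℕ) + 1)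
    (h : TC a b i j) : R a b i j := by
  cases h with
  | single h => exact h
  | tail h1 h2 =>
    have hlt1 := TC.lt h1
    have hlt2 := (h2 : R a b _ _).1
    rw [Fin.lt_def] at hlt1 hlt2
    omega

lemma Des_inf (a b : Equiv.Perm (Fin n)) : Des (a ⊓ b) = Des a ∩ Des b := by
  ext i
  simp only [mem_Des, Finset.mem_inter]
  by_cases hi : (i : ℕ) + 1 < n
  · set j : Fin n := ⟨(i : ℕ) + 1, hi⟩ with hjdef
    have hj : (j : ℕ) = (i : ℕ) + 1 := rfl
    have hij : i < j := by rw [Fin.lt_def, hj]; omega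
    have hne : i ≠ j := Fin.ne_of_lt hij
    have hex : ∀ (c : Equiv.Perm (Fin n)),
        (∃ j' : Fin n, (j' : ℕ) = (i : ℕ) + 1 ∧ c j' < c i) ↔ c j < c i := by
      intro c
      constructor
      · rintro ⟨j', hj', hlt⟩
        have : j' = j := Fin.ext (by rw [hj', hj])
        rwa [this] at hlt
      · intro h; exact ⟨j, hj, h⟩
    rw [hex (a ⊓ b), hex a, hex b]
    have hmeet : (a ⊓ b : Equiv.Perm (Fin n)) = meet a b := rfl
    rw [hmeet, meet_lt_iff hij]
    constructor
    · intro ht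
      have hnr : ¬ R a b i j := fun hr => ht (.single hr)
      constructor
      · exact lt_of_not_lt hne (fun hc => hnr ⟨hij, Or.inl hc⟩)
      · exact lt_of_not_lt hne (fun hc => hnr ⟨hij, Or.inr hc⟩)
    · rintro ⟨ha, hb⟩ ht
      rcases (TC_adj hj ht).2 with h | h
      · exact absurd h (asymm ha)
      · exact absurd h (asymm hb)
  · have hno : ∀ (c : Equiv.Perm (Fin n)),
        ¬ ∃ j' : Fin n, (j' : ℕ) = (i : ℕ) + 1 ∧ c j' < c i := by
      rintro c ⟨j', hj', -⟩
      exact hi (hj' ▸ j'.isLt)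
    simp [hno]

lemma Des_one : Des (1 : Equiv.Perm (Fin n)) = ∅ := by
  ext i
  simp only [mem_Des, Finset.notMem_empty, iff_false]
  rintro ⟨j, hj, hlt⟩
  rw [Fin.lt_def] at hlt
  simp only [Equiv.Perm.one_apply] at hlt
  omega

lemma eq_one_of_Des_empty {x : Equiv.Perm (Fin n)} (h : Des x = ∅) : x = 1 := by
  have hadj : ∀ i j : Fin n, (j : ℕ) = (i : ℕ) + 1 → x i < x j := by
    intro i j hj
    have : i ∉ Des x := by rw [h]; exact Finset.notMem_empty i
    rw [mem_Des] at this
    push_neg at this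
    have hne : i ≠ j := by intro he; rw [he] at hj; omega
    exact lt_of_not_lt hne.symm (not_lt.mpr (this j hj))
  have hsm : StrictMono x := by
    cases n with
    | zero => intro i; exact i.elim0
    | succ m =>
      rw [Fin.strictMono_iff_lt_succ]
      intro i
      exact hadj i.castSucc i.succ (by simp)
  refine Equiv.ext fun i => ?_
  rw [strictMono_fin_id hsm i]
  rfl

end Stmt8Aux

open Finset Stmt8Aux

/-- For each `n ≥ 2` there are a permutation `w ∈ S_n` and an essential
semilattice congruence `≡` on the left weak order of `S_n` such that `S_≡(w)` has exactly
`n - 2` descents.  Explicitly, with `k = ⌈n/2⌉` and `u, v` given by the stated formulas,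
`u ≤_L v`, `u` and `v` have the same descent set, and `v * u⁻¹` is the permutation
`k(k-1)⋯21 n(n-1)⋯(k+1)`, which has `n - 2` descents. -/
theorem stmt_8 (n : ℕ) (hn : 2 ≤ n) (k : ℕ) (hk : k = (n + 1) / 2)
    -- the left weak order on `S_n`, via containment of right inversion sets
    (lL : Equiv.Perm (Fin n) → Equiv.Perm (Fin n) → Prop)
    (hlL : ∀ a b, lL a b ↔ ∀ i j : Fin n, i < j → a j < a i → b j < b i)
    (u v : Equiv.Perm (Fin n))
    (hu : ∀ i : Fin n, ((u i : ℕ) + 1) =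
      if ((i : ℕ) + 1) % 2 = 1 then ((i : ℕ) + 2) / 2 else k + ((i : ℕ) + 1) / 2)
    (hv : ∀ i : Fin n, ((v i : ℕ) + 1) =
      if ((i : ℕ) + 1) % 2 = 1 then k - (i : ℕ) / 2 else n + 1 - ((i : ℕ) + 1) / 2) :
    -- `u ≤_L v`
    lL u v ∧
    -- `u` and `v` have the same descent set
    (∀ i j : Fin n, (j : ℕ) = (i : ℕ) + 1 → (u j < u i ↔ v j < v i)) ∧
    -- `v * u⁻¹` is the explicit permutation `k(k-1)⋯21 n(n-1)⋯(k+1)`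
    (∀ p : Fin n, (((v * u⁻¹) p : ℕ) + 1) =
      if (p : ℕ) + 1 ≤ k then k - (p : ℕ) else n + k - (p : ℕ)) ∧
    -- the main claim: a permutation `w` and an essential semilattice congruence `r`
    -- whose stack-sorting operator sends `w` to a permutation with `n - 2` descents
    (∃ (r : Equiv.Perm (Fin n) → Equiv.Perm (Fin n) → Prop)
       (inf : Equiv.Perm (Fin n) → Equiv.Perm (Fin n) → Equiv.Perm (Fin n))
       (pd : Equiv.Perm (Fin n) → Equiv.Perm (Fin n)) (w : Equiv.Perm (Fin n)),
      Equivalence r ∧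
      (∀ x y, lL (inf x y) x ∧ lL (inf x y) y ∧ ∀ z, lL z x → lL z y → lL z (inf x y)) ∧
      (∀ x1 x2 y1 y2, r x1 x2 → r y1 y2 → r (inf x1 y1) (inf x2 y2)) ∧
      (∀ x, r x 1 → x = 1) ∧
      (∀ x, r (pd x) x ∧ ∀ y, r y x → lL (pd x) y) ∧
      Set.ncard {i : Fin n | ∃ j : Fin n, (j : ℕ) = (i : ℕ) + 1 ∧
        (w * (pd w)⁻¹) j < (w * (pd w)⁻¹) i} = n - 2) := by
  classical
  have hle : ∀ a b : Equiv.Perm (Fin n), lL a b ↔ a ≤ b := fun a b =>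
    (hlL a b).trans le_iff.symm
  -- normalized value formulas
  have hu' : ∀ i : Fin n, ((i : ℕ) % 2 = 0 ∧ ((u i : ℕ)) + 1 = ((i : ℕ) + 2) / 2) ∨
      ((i : ℕ) % 2 = 1 ∧ (u i : ℕ) + 1 = k + ((i : ℕ) + 1) / 2) := by
    intro i
    have h := hu i
    by_cases hp : ((i : ℕ) + 1) % 2 = 1
    · rw [if_pos hp] at h; left; omega
    · rw [if_neg hp] at h; right; omega
  have hv' : ∀ i : Fin n, ((i : ℕ) % 2 = 0 ∧ (v i : ℕ) + 1 = k - (i : ℕ) / 2) ∨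
      ((i : ℕ) % 2 = 1 ∧ (v i : ℕ) + 1 = n + 1 - ((i : ℕ) + 1) / 2) := by
    intro i
    have h := hv i
    by_cases hp : ((i : ℕ) + 1) % 2 = 1
    · rw [if_pos hp] at h; left; omega
    · rw [if_neg hp] at h; right; omega
  have part1 : lL u v := by
    rw [hlL]
    intro i j hij hlt
    rw [Fin.lt_def] at hij hlt ⊢
    have hjn := j.isLt
    have hin := i.isLt
    rcases hu' i with ⟨hi0, hui⟩ | ⟨hi1, hui⟩ <;> rcases hu' j with ⟨hj0, huj⟩ | ⟨hj1, huj⟩ <;>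
      rcases hv' i with ⟨hvi0, hvi⟩ | ⟨hvi1, hvi⟩ <;>
      rcases hv' j with ⟨hvj0, hvj⟩ | ⟨hvj1, hvj⟩ <;> omega
  have part2 : ∀ i j : Fin n, (j : ℕ) = (i : ℕ) + 1 → (u j < u i ↔ v j < v i) := by
    intro i j hj
    rw [Fin.lt_def, Fin.lt_def]
    have hjn := j.isLt
    rcases hu' i with ⟨hi0, hui⟩ | ⟨hi1, hui⟩ <;> rcases hu' j with ⟨hj0, huj⟩ | ⟨hj1, huj⟩ <;>
      rcases hv' i with ⟨hvi0, hvi⟩ | ⟨hvi1, hvi⟩ <;>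
      rcases hv' j with ⟨hvj0, hvj⟩ | ⟨hvj1, hvj⟩ <;> omega
  have part3 : ∀ p : Fin n, (((v * u⁻¹) p : ℕ) + 1) =
      if (p : ℕ) + 1 ≤ k then k - (p : ℕ) else n + k - (p : ℕ) := by
    intro p
    have hpn := p.isLt
    by_cases hpk : (p : ℕ) + 1 ≤ k
    · have hb : 2 * (p : ℕ) < n := by omega
      set i : Fin n := ⟨2 * (p : ℕ), hb⟩ with hidef
      have hival : (i : ℕ) = 2 * (p : ℕ) := rfl
      have hui := hu i
      rw [hival, if_pos (by omega)] at hui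
      have huip : u i = p := by apply Fin.ext; omega
      have hinv : u⁻¹ p = i := by rw [← huip]; exact Equiv.symm_apply_apply u i
      have hmul : (v * u⁻¹) p = v i := by rw [Equiv.Perm.mul_apply, hinv]
      rw [hmul, if_pos hpk]
      have hvi := hv i
      rw [hival, if_pos (by omega)] at hvi
      omega
    · have hb : 2 * ((p : ℕ) - k) + 1 < n := by omega
      set i : Fin n := ⟨2 * ((p : ℕ) - k) + 1, hb⟩ with hidef
      have hival : (i : ℕ) = 2 * ((p : ℕ) - k) + 1 := rfl
      have hui := hu i
      rw [hival, if_neg (by omega)] at hui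
      have huip : u i = p := by apply Fin.ext; omega
      have hinv : u⁻¹ p = i := by rw [← huip]; exact Equiv.symm_apply_apply u i
      have hmul : (v * u⁻¹) p = v i := by rw [Equiv.Perm.mul_apply, hinv]
      rw [hmul, if_neg hpk]
      have hvi := hv i
      rw [hival, if_neg (by omega)] at hvi
      omega
  refine ⟨part1, part2, part3, ?_⟩
  -- the congruence: same descent set, and same meet with u
  set pdf : Equiv.Perm (Fin n) → Equiv.Perm (Fin n) := fun x =>
    (univ.filter (fun y => Des y = Des x ∧ u ⊓ y = u ⊓ x)).inf'
      ⟨x, Finset.mem_filter.mpr ⟨Finset.mem_univ x, rfl, rfl⟩⟩ id with hpdf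
  refine ⟨fun a b => Des a = Des b ∧ u ⊓ a = u ⊓ b, fun a b => a ⊓ b, pdf, v,
    ⟨fun x => ⟨rfl, rfl⟩, fun h => ⟨h.1.symm, h.2.symm⟩,
      fun h h' => ⟨h.1.trans h'.1, h.2.trans h'.2⟩⟩,
    fun x y => ⟨(hle _ _).mpr inf_le_left, (hle _ _).mpr inf_le_right,
      fun z h1 h2 => (hle _ _).mpr (le_inf ((hle _ _).mp h1) ((hle _ _).mp h2))⟩,
    ?_, ?_, ?_, ?_⟩
  · -- congruence
    intro x1 x2 y1 y2 h1 h2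
    refine ⟨by rw [Des_inf, Des_inf, h1.1, h2.1], ?_⟩
    rw [inf_inf_distrib_left, h1.2, h2.2, ← inf_inf_distrib_left]
  · -- essential
    intro x hx
    exact eq_one_of_Des_empty (by rw [hx.1, Des_one])
  · -- pd is the minimum of each class
    intro x
    have hmem : pdf x ∈ {y : Equiv.Perm (Fin n) | Des y = Des x ∧ u ⊓ y = u ⊓ x} := by
      apply Finset.inf'_mem
      · intro a ha b hb
        refine ⟨by rw [Des_inf, ha.1, hb.1, Finset.inter_self], ?_⟩
        rw [inf_inf_distrib_left, ha.2, hb.2, inf_idem]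
      · intro i hi
        exact (Finset.mem_filter.mp hi).2
    refine ⟨hmem, ?_⟩
    intro y hy
    exact (hle _ _).mpr (Finset.inf'_le id (Finset.mem_filter.mpr ⟨Finset.mem_univ y, hy⟩))
  · -- the count of descents
    have huv : u ≤ v := (hle u v).mp part1
    have hrv : Des u = Des v ∧ u ⊓ u = u ⊓ v := by
      constructor
      · ext i
        simp only [mem_Des]
        exact exists_congr fun j => and_congr_right fun hj => part2 i j hj
      · rw [inf_idem, inf_eq_left.mpr huv]
    have hpdv : pdf v = u := by
      apply le_antisymm
      · exact Finset.inf'_le id (Finset.mem_filter.mpr ⟨Finset.mem_univ u, hrv⟩)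
      · apply Finset.le_inf'
        intro y hy
        have hm := (Finset.mem_filter.mp hy).2.2
        rw [inf_eq_left.mpr huv] at hm
        exact inf_eq_left.mp hm
    rw [hpdv]
    have hset : {i : Fin n | ∃ j : Fin n, (j : ℕ) = (i : ℕ) + 1 ∧ (v * u⁻¹) j < (v * u⁻¹) i}
        = ↑(univ.filter (fun i : Fin n => (i : ℕ) + 1 < n ∧ (i : ℕ) ≠ k - 1)) := by
      ext i
      have h1 := part3 i
      have hin := i.isLt
      simp only [Set.mem_setOf_eq, Finset.coe_filter, Finset.mem_univ, true_and,
        Set.mem_setOf_eq]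
      constructor
      · rintro ⟨j, hj, hlt⟩
        have h2 := part3 j
        rw [hj] at h2
        rw [Fin.lt_def] at hlt
        have hjn := j.isLt
        rw [hj] at hjn
        split_ifs at h1 h2 <;> omega
      · rintro ⟨h1n, hik⟩
        set j : Fin n := ⟨(i : ℕ) + 1, h1n⟩ with hjdef
        have hjval : (j : ℕ) = (i : ℕ) + 1 := rfl
        refine ⟨j, hjval, ?_⟩
        have h2 := part3 j
        rw [hjval] at h2
        rw [Fin.lt_def]
        split_ifs at h1 h2 <;> omega
    rw [hset, Set.ncard_coe_finset]
    have hcard : (univ.filter (fun i : Fin n => (i : ℕ) + 1 < n ∧ (i : ℕ) ≠ k - 1)).card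
        = (((Finset.range n).filter (fun m => m + 1 < n ∧ m ≠ k - 1))).card := by
      refine Finset.card_bij' (fun (a : Fin n) (_ : a ∈ _) => (a : ℕ))
        (fun (m : ℕ) (hm : m ∈ (Finset.range n).filter (fun m => m + 1 < n ∧ m ≠ k - 1)) =>
          (⟨m, Finset.mem_range.mp (Finset.mem_filter.mp hm).1⟩ : Fin n)) ?_ ?_ ?_ ?_
      · intro a ha
        simp only [Finset.mem_filter, Finset.mem_range]
        exact ⟨a.isLt, (Finset.mem_filter.mp ha).2⟩
      · intro m hm
        simp only [Finset.mem_filter, Finset.mem_univ, true_and]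
        exact (Finset.mem_filter.mp hm).2
      · intro a ha; rfl
      · intro m hm; rfl
    rw [hcard]
    have hfeq : (Finset.range n).filter (fun m => m + 1 < n ∧ m ≠ k - 1)
        = ((Finset.range (n - 1)).erase (k - 1)) := by
      ext m
      simp only [Finset.mem_filter, Finset.mem_range, Finset.mem_erase]
      omega
    rw [hfeq, Finset.card_erase_of_mem (Finset.mem_range.mpr (by omega)),
      Finset.card_range]
    omega
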